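/- Let T ≥ 1, let φ : ℝ → ℝ be convex on [0,∞) with φ(1) = 0, let δ > 0, and let ψ : ℝ → ℝ be differentiable and satisfy, for all y ∈ ℝ: ψ'(y) ≥ 0, the Fenchel–Young equality φ(ψ'(y)) + ψ(y) = y·ψ'(y), and the Fenchel–Young inequality ψ(y) ≥ y·z − φ(z) for all z ≥ 0. Let l ∈ ℝ^T and suppose t⋆ > 0 and μ⋆ ∈ ℝ solve the characterizing equations (1/T) ∑_t ψ'(l_t/t⋆ − μ⋆) = 1 and (1/T) ∑_t φ(ψ'(l_t/t⋆ − μ⋆)) = δ. Then the vector q⋆ defined by q⋆_t = ψ'(l_t/t⋆ − μ⋆)/T belongs to Q_{φ,δ}, satisfies ∑_t q⋆_t l_t = t⋆·(δ + μ⋆ + (1/T) ∑_t ψ(l_t/t⋆ − μ⋆)), and is optimal in the dual problem: ρ_{φ,δ}(l) = ∑_t q⋆_t l_t. -/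

import Mathlib

/-- The feasible perturbation set `Q_{φ,δ}` of probability vectors on `Fin T`
whose f-divergence from the uniform vector is at most `δ`. -/
def QSet (T : ℕ) (φ : ℝ → ℝ) (δ : ℝ) : Set (Fin T → ℝ) :=
  {q | (∀ t, 0 ≤ q t) ∧ (∑ t, q t = 1) ∧
    (1 / (T : ℝ)) * ∑ t, φ ((T : ℝ) * q t) ≤ δ}

/-- The f-divergence induced risk `ρ_{φ,δ}(l) = sup_{q ∈ Q_{φ,δ}} ∑_t q_t l_t`. -/
noncomputable def fRisk (T : ℕ) (φ : ℝ → ℝ) (δ : ℝ) (l : Fin T → ℝ) : ℝ :=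
  sSup ((fun q : Fin T → ℝ => ∑ t, q t * l t) '' (QSet T φ δ))

theorem stmt_4 (T : ℕ) (hT : 1 ≤ T) (φ ψ ψ' : ℝ → ℝ)
    (hφconv : ConvexOn ℝ (Set.Ici (0 : ℝ)) φ) (hφ1 : φ 1 = 0)
    (δ : ℝ) (hδ : 0 < δ)
    (hderiv : ∀ y : ℝ, HasDerivAt ψ (ψ' y) y)
    (hψ'nonneg : ∀ y : ℝ, 0 ≤ ψ' y)
    (hFYeq : ∀ y : ℝ, φ (ψ' y) + ψ y = y * ψ' y)
    (hFY : ∀ y z : ℝ, 0 ≤ z → y * z - φ z ≤ ψ y)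
    (l : Fin T → ℝ) (tstar μstar : ℝ) (htstar : 0 < tstar)
    (hch1 : (1 / (T : ℝ)) * ∑ t, ψ' (l t / tstar - μstar) = 1)
    (hch2 : (1 / (T : ℝ)) * ∑ t, φ (ψ' (l t / tstar - μstar)) = δ) :
    (fun t => ψ' (l t / tstar - μstar) / (T : ℝ)) ∈ QSet T φ δ ∧
    (∑ t, (ψ' (l t / tstar - μstar) / (T : ℝ)) * l t =
      tstar * (δ + μstar + (1 / (T : ℝ)) * ∑ t, ψ (l t / tstar - μstar))) ∧
    fRisk T φ δ l = ∑ t, (ψ' (l t / tstar - μstar) / (T : ℝ)) * l t := by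
  have hTpos : (0:ℝ) < (T:ℝ) := by exact_mod_cast Nat.lt_of_lt_of_le Nat.zero_lt_one hT
  have hTne : (T:ℝ) ≠ 0 := ne_of_gt hTpos
  set y : Fin T → ℝ := fun t => l t / tstar - μstar with hy
  have hS1 : ∑ t, ψ' (y t) = (T:ℝ) := by
    rw [one_div, inv_mul_eq_div, div_eq_one_iff_eq hTne] at hch1; exact hch1
  have hS2 : ∑ t, φ (ψ' (y t)) = δ * (T:ℝ) := by
    rw [one_div, inv_mul_eq_div, div_eq_iff hTne] at hch2; exact hch2
  -- membership
  have hmem : (fun t => ψ' (y t) / (T:ℝ)) ∈ QSet T φ δ := by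
    refine ⟨fun t => div_nonneg (hψ'nonneg _) hTpos.le, ?_, ?_⟩
    · rw [← Finset.sum_div, hS1, div_self hTne]
    · have hrw : ∀ t : Fin T, (T:ℝ) * (ψ' (y t) / (T:ℝ)) = ψ' (y t) := fun t => by
        field_simp
      simp only [hrw]
      rw [hS2]
      field_simp
      norm_num
  -- value identity
  have key : ∀ t : Fin T, ψ' (y t) * l t
      = tstar * (φ (ψ' (y t)) + ψ (y t)) + tstar * μstar * ψ' (y t) := by
    intro t
    have h1 : tstar * (φ (ψ' (y t)) + ψ (y t)) = tstar * (y t * ψ' (y t)) := by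
      rw [hFYeq]
    have h2 : tstar * (y t * ψ' (y t)) = l t * ψ' (y t) - tstar * μstar * ψ' (y t) := by
      simp only [hy]
      field_simp
    nlinarith [h1, h2]
  have hsum : ∑ t, ψ' (y t) * l t
      = tstar * ((∑ t, φ (ψ' (y t))) + ∑ t, ψ (y t)) + tstar * μstar * ∑ t, ψ' (y t) := by
    rw [Finset.sum_congr rfl fun t _ => key t]
    rw [Finset.sum_add_distrib, ← Finset.mul_sum, ← Finset.mul_sum, Finset.sum_add_distrib,
      mul_add]
  have hdivsum : ∑ t, (ψ' (y t) / (T:ℝ)) * l t = (∑ t, ψ' (y t) * l t) / (T:ℝ) := by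
    rw [Finset.sum_div]
    exact Finset.sum_congr rfl fun t _ => by ring
  have hval : ∑ t, (ψ' (y t) / (T:ℝ)) * l t
      = tstar * (δ + μstar + (1/(T:ℝ)) * ∑ t, ψ (y t)) := by
    rw [hdivsum, hsum, hS1, hS2]
    field_simp
    ring
  -- upper bound
  set V : ℝ := tstar * (δ + μstar + (1/(T:ℝ)) * ∑ t, ψ (y t)) with hV
  have hub : ∀ q ∈ QSet T φ δ, ∑ t, q t * l t ≤ V := by
    rintro q ⟨hq0, hq1, hq2⟩
    have key2 : ∀ t : Fin T, (y t) * ((T:ℝ) * q t) - φ ((T:ℝ) * q t) ≤ ψ (y t) :=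
      fun t => hFY _ _ (mul_nonneg hTpos.le (hq0 t))
    have hsum2 : ∑ t, ((y t) * ((T:ℝ) * q t)) ≤ ∑ t, ψ (y t) + ∑ t, φ ((T:ℝ) * q t) := by
      have h := Finset.sum_le_sum (fun t (_ : t ∈ Finset.univ) => key2 t)
      rw [Finset.sum_sub_distrib] at h
      linarith
    have expand : ∑ t, ((y t) * ((T:ℝ) * q t))
        = (T:ℝ)/tstar * ∑ t, q t * l t - μstar * (T:ℝ) := by
      have hrw : ∀ t : Fin T, (y t) * ((T:ℝ) * q t)
          = (T:ℝ)/tstar * (q t * l t) - μstar * ((T:ℝ) * q t) := fun t => by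
        simp only [hy]; ring
      rw [Finset.sum_congr rfl fun t _ => hrw t, Finset.sum_sub_distrib, ← Finset.mul_sum,
        ← Finset.mul_sum, ← Finset.mul_sum, hq1]
      ring
    have hφq : ∑ t, φ ((T:ℝ) * q t) ≤ δ * (T:ℝ) := by
      rw [one_div, inv_mul_eq_div, div_le_iff₀ hTpos] at hq2; exact hq2
    have h4 : (T:ℝ)/tstar * ∑ t, q t * l t ≤ ∑ t, ψ (y t) + δ * (T:ℝ) + μstar * (T:ℝ) := by
      rw [expand] at hsum2; linarith
    have h5 : (T:ℝ) * ∑ t, q t * l t ≤ tstar * (∑ t, ψ (y t) + δ * (T:ℝ) + μstar * (T:ℝ)) := by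
      have := mul_le_mul_of_nonneg_left h4 htstar.le
      have hl : tstar * ((T:ℝ)/tstar * ∑ t, q t * l t) = (T:ℝ) * ∑ t, q t * l t := by
        rw [show tstar * ((T:ℝ)/tstar * ∑ t, q t * l t) = (T:ℝ)/tstar*tstar* ∑ t, q t * l t from by ring, div_mul_cancel₀ _ htstar.ne']
      linarith [hl ▸ this]
    have hTV : (T:ℝ) * V = tstar * (∑ t, ψ (y t) + δ * (T:ℝ) + μstar * (T:ℝ)) := by
      have hone : (T:ℝ) * ((1/(T:ℝ)) * ∑ t, ψ (y t)) = ∑ t, ψ (y t) := by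
        rw [← mul_assoc, mul_one_div, div_self hTne, one_mul]
      rw [hV]
      linear_combination tstar * hone
    nlinarith [h5, hTV, hTpos]
  refine ⟨hmem, hval, ?_⟩
  have hne : ((fun q : Fin T → ℝ => ∑ t, q t * l t) '' QSet T φ δ).Nonempty :=
    ⟨_, ⟨_, hmem, rfl⟩⟩
  have hbdd : ∀ x ∈ (fun q : Fin T → ℝ => ∑ t, q t * l t) '' QSet T φ δ, x ≤ V := by
    rintro x ⟨q, hq, rfl⟩; exact hub q hq
  have : fRisk T φ δ l = V := by
    refine le_antisymm (csSup_le hne hbdd) ?_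
    rw [← hval]
    exact le_csSup ⟨V, hbdd⟩ ⟨_, hmem, rfl⟩
  rw [this, ← hval]
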